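/- Let α, β : ℤ × ℤ → ℂ be double sequences such that β is antisymmetric (β(n,k) = −β(k,n) for all n,k), α(n,n) ≠ 0 for every integer n, β(n,k) ≠ 0 whenever n ≠ k, and α, β satisfy the triple sum identity (TSI). For integers k ≤ n define F(n,k) = (∏_{i=k}^{n−1} α(i,k)) / (∏_{i=k+1}^{n} β(i,k)) and G(n,k) = (α(k,k)/α(n,n)) · (∏_{i=k+1}^{n} α(i,n)) / (∏_{i=k}^{n−1} β(i,n)). Then for all integers k ≤ n, ∑_{i=k}^{n} F(n,i)·G(i,k) equals 1 if n = k and equals 0 if n > k. -/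

import Mathlib

open Finset

private lemma ab_prod_split (f : ℤ → ℂ) {k i n : ℤ} (h1 : k ≤ i) (h2 : i ≤ n) (h3 : k < n) :
    (∏ j ∈ Finset.Icc i (n - 1), f j) * (∏ j ∈ Finset.Icc (k + 1) i, f j) =
      f i * ∏ j ∈ Finset.Icc (k + 1) (n - 1), f j := by
  rcases eq_or_lt_of_le h2 with rfl | hlt
  · rw [Finset.Icc_eq_empty (by omega), Finset.prod_empty, one_mul]
    have h4 : Finset.Icc (k + 1) i = insert i (Finset.Icc (k + 1) (i - 1)) := by
      ext x; simp only [Finset.mem_Icc, Finset.mem_insert]; omega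
    rw [h4, Finset.prod_insert (by simp only [Finset.mem_Icc]; omega)]
  · have h4 : Finset.Icc i (n - 1) = insert i (Finset.Icc (i + 1) (n - 1)) := by
      ext x; simp only [Finset.mem_Icc, Finset.mem_insert]; omega
    have hu : Finset.Icc (k + 1) i ∪ Finset.Icc (i + 1) (n - 1) = Finset.Icc (k + 1) (n - 1) := by
      ext x; simp only [Finset.mem_Icc, Finset.mem_union]; omega
    have hd : Disjoint (Finset.Icc (k + 1) i) (Finset.Icc (i + 1) (n - 1)) := by
      rw [Finset.disjoint_left]; intro x hx hx'
      simp only [Finset.mem_Icc] at hx hx'; omega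
    rw [h4, Finset.prod_insert (by simp only [Finset.mem_Icc]; omega), ← hu,
      Finset.prod_union hd]
    ring

private lemma ab_denom_split (f : ℤ → ℂ) {k i n : ℤ} (h1 : k ≤ i) (h2 : i ≤ n) :
    (∏ j ∈ Finset.Icc (i + 1) n, f j) * (∏ j ∈ Finset.Icc k (i - 1), f j) =
      ∏ j ∈ (Finset.Icc k n).erase i, f j := by
  have hu : Finset.Icc k (i - 1) ∪ Finset.Icc (i + 1) n = (Finset.Icc k n).erase i := by
    ext x; simp only [Finset.mem_Icc, Finset.mem_union, Finset.mem_erase]; omega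
  have hd : Disjoint (Finset.Icc k (i - 1)) (Finset.Icc (i + 1) n) := by
    rw [Finset.disjoint_left]; intro x hx hx'
    simp only [Finset.mem_Icc] at hx hx'; omega
  rw [← hu, Finset.prod_union hd]; ring

private lemma ab_key
    (α β : ℤ → ℤ → ℂ)
    (hanti : ∀ n k : ℤ, β n k = -β k n)
    (hβ : ∀ n k : ℤ, n ≠ k → β n k ≠ 0)
    (hTSI : ∀ n k p q : ℤ, α n p * β q k + α n q * β k p + α n k * β p q = 0) :
    ∀ (C I : Finset ℤ), I.card = C.card + 2 →
      ∑ i ∈ I, (∏ t ∈ C, α t i) / ∏ j ∈ I.erase i, β j i = 0 := by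
  have hβ0 : ∀ x : ℤ, β x x = 0 := by
    intro x; linear_combination (hanti x x) / 2
  intro C
  induction C using Finset.cons_induction with
  | empty =>
    intro I hI
    obtain ⟨a, b, hab, rfl⟩ := Finset.card_eq_two.mp (by simpa using hI)
    rw [Finset.sum_pair hab]
    have e1 : ({a, b} : Finset ℤ).erase a = {b} := by
      ext x; simp only [Finset.mem_erase, Finset.mem_insert, Finset.mem_singleton]; omega
    have e2 : ({a, b} : Finset ℤ).erase b = {a} := by
      ext x; simp only [Finset.mem_erase, Finset.mem_insert, Finset.mem_singleton]; omega
    rw [e1, e2]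
    simp only [Finset.prod_empty, Finset.prod_singleton]
    rw [hanti a b, div_neg]
    ring
  | cons c₀ C' hc₀ ih =>
    intro I hI
    rw [Finset.card_cons] at hI
    have hcard : 3 ≤ I.card := by omega
    have hne : I.Nonempty := Finset.card_pos.mp (by omega)
    obtain ⟨a, ha⟩ := hne
    have hne2 : (I.erase a).Nonempty := by
      apply Finset.card_pos.mp
      rw [Finset.card_erase_of_mem ha]; omega
    obtain ⟨b, hb⟩ := hne2
    have hba : b ≠ a := Finset.ne_of_mem_erase hb
    have hbI : b ∈ I := Finset.mem_of_mem_erase hb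
    have hβba : β b a ≠ 0 := hβ b a hba
    have hsplit : ∀ i : ℤ, α c₀ i * β b a = α c₀ b * β i a + α c₀ a * β b i := by
      intro i
      linear_combination hTSI c₀ a i b - α c₀ b * hanti i a - α c₀ a * hanti b i
    have hterm : ∀ i ∈ I,
        (∏ t ∈ Finset.cons c₀ C' hc₀, α t i) / ∏ j ∈ I.erase i, β j i =
          α c₀ b / β b a * ((β i a * ∏ t ∈ C', α t i) / ∏ j ∈ I.erase i, β j i) +
          α c₀ a / β b a * ((β b i * ∏ t ∈ C', α t i) / ∏ j ∈ I.erase i, β j i) := by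
      intro i _
      rw [Finset.prod_cons]
      have h : α c₀ i = (α c₀ b * β i a + α c₀ a * β b i) / β b a := by
        rw [eq_div_iff hβba]; linear_combination hsplit i
      rw [h]; ring
    rw [Finset.sum_congr rfl hterm, Finset.sum_add_distrib, ← Finset.mul_sum, ← Finset.mul_sum]
    have hsum1 : ∑ i ∈ I, (β i a * ∏ t ∈ C', α t i) / ∏ j ∈ I.erase i, β j i = 0 := by
      rw [← Finset.add_sum_erase I _ ha, hβ0, zero_mul, zero_div, zero_add]
      have hstep : ∀ i ∈ I.erase a,
          (β i a * ∏ t ∈ C', α t i) / ∏ j ∈ I.erase i, β j i =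
            -((∏ t ∈ C', α t i) / ∏ j ∈ (I.erase a).erase i, β j i) := by
        intro i hi
        have hia : i ≠ a := Finset.ne_of_mem_erase hi
        have hiI : i ∈ I := Finset.mem_of_mem_erase hi
        have haei : a ∈ I.erase i := Finset.mem_erase.mpr ⟨fun h => hia h.symm, ha⟩
        rw [← Finset.mul_prod_erase (I.erase i) _ haei, Finset.erase_right_comm,
          hanti i a, neg_mul, neg_div, mul_div_mul_left _ _ (hβ a i (fun h => hia h.symm))]
      rw [Finset.sum_congr rfl hstep, Finset.sum_neg_distrib]
      rw [ih (I.erase a) (by rw [Finset.card_erase_of_mem ha]; omega), neg_zero]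
    have hsum2 : ∑ i ∈ I, (β b i * ∏ t ∈ C', α t i) / ∏ j ∈ I.erase i, β j i = 0 := by
      rw [← Finset.add_sum_erase I _ hbI, hβ0, zero_mul, zero_div, zero_add]
      have hstep : ∀ i ∈ I.erase b,
          (β b i * ∏ t ∈ C', α t i) / ∏ j ∈ I.erase i, β j i =
            (∏ t ∈ C', α t i) / ∏ j ∈ (I.erase b).erase i, β j i := by
        intro i hi
        have hib : i ≠ b := Finset.ne_of_mem_erase hi
        have hiI : i ∈ I := Finset.mem_of_mem_erase hi
        have hbei : b ∈ I.erase i := Finset.mem_erase.mpr ⟨fun h => hib h.symm, hbI⟩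
        rw [← Finset.mul_prod_erase (I.erase i) _ hbei, Finset.erase_right_comm,
          mul_div_mul_left _ _ (hβ b i (fun h => hib h.symm))]
      rw [Finset.sum_congr rfl hstep]
      exact ih (I.erase b) (by rw [Finset.card_erase_of_mem hbI]; omega)
    rw [hsum1, hsum2, mul_zero, mul_zero, add_zero]

/-- The `(α,β)`-inversion formula (Hsu–Ma conjecture, sufficiency direction):
if `β` is antisymmetric, `α n n ≠ 0`, `β n k ≠ 0` for `n ≠ k`, and the triple
sum identity `α n p * β q k + α n q * β k p + α n k * β p q = 0` holds, then the
matrices `F(n,k) = (∏_{i=k}^{n-1} α i k) / (∏_{i=k+1}^{n} β i k)` and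
`G(n,k) = (α k k / α n n) * (∏_{i=k+1}^{n} α i n) / (∏_{i=k}^{n-1} β i n)`
form a matrix inversion. -/
theorem alpha_beta_inversion
    (α β : ℤ → ℤ → ℂ)
    (hanti : ∀ n k : ℤ, β n k = -β k n)
    (hα : ∀ n : ℤ, α n n ≠ 0)
    (hβ : ∀ n k : ℤ, n ≠ k → β n k ≠ 0)
    (hTSI : ∀ n k p q : ℤ, α n p * β q k + α n q * β k p + α n k * β p q = 0) :
    ∀ k n : ℤ, k ≤ n →
      (∑ i ∈ Finset.Icc k n,
        ((∏ j ∈ Finset.Icc i (n - 1), α j i) / (∏ j ∈ Finset.Icc (i + 1) n, β j i)) *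
        ((α k k / α i i) *
          (∏ j ∈ Finset.Icc (k + 1) i, α j i) / (∏ j ∈ Finset.Icc k (i - 1), β j i))) =
      if n = k then 1 else 0 := by
  intro k n hkn
  rcases eq_or_lt_of_le hkn with rfl | hlt
  · rw [if_pos rfl, Finset.Icc_self, Finset.sum_singleton]
    have h1 : Finset.Icc k (k - 1) = ∅ := Finset.Icc_eq_empty (by omega)
    have h2 : Finset.Icc (k + 1) k = ∅ := Finset.Icc_eq_empty (by omega)
    rw [h1, h2]
    simp [div_self (hα k)]
  · rw [if_neg (by omega)]
    have hterm : ∀ i ∈ Finset.Icc k n,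
        ((∏ j ∈ Finset.Icc i (n - 1), α j i) / (∏ j ∈ Finset.Icc (i + 1) n, β j i)) *
        ((α k k / α i i) *
          (∏ j ∈ Finset.Icc (k + 1) i, α j i) / (∏ j ∈ Finset.Icc k (i - 1), β j i)) =
        α k k * ((∏ j ∈ Finset.Icc (k + 1) (n - 1), α j i) /
          ∏ j ∈ (Finset.Icc k n).erase i, β j i) := by
      intro i hi
      rw [Finset.mem_Icc] at hi
      have hnum := ab_prod_split (fun j => α j i) hi.1 hi.2 hlt
      have hden := ab_denom_split (fun j => β j i) hi.1 hi.2
      have e1 : ((∏ j ∈ Finset.Icc i (n - 1), α j i) / (∏ j ∈ Finset.Icc (i + 1) n, β j i)) *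
          ((α k k / α i i) *
            (∏ j ∈ Finset.Icc (k + 1) i, α j i) / (∏ j ∈ Finset.Icc k (i - 1), β j i)) =
          α k k * (((∏ j ∈ Finset.Icc i (n - 1), α j i) * (∏ j ∈ Finset.Icc (k + 1) i, α j i)) /
            (α i i * ((∏ j ∈ Finset.Icc (i + 1) n, β j i) * (∏ j ∈ Finset.Icc k (i - 1), β j i)))) := by
        ring
      rw [e1, hnum, hden, mul_div_mul_left _ _ (hα i)]
    rw [Finset.sum_congr rfl hterm, ← Finset.mul_sum,
      ab_key α β hanti hβ hTSI (Finset.Icc (k + 1) (n - 1)) (Finset.Icc k n)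
        (by rw [Int.card_Icc, Int.card_Icc]; omega),
      mul_zero]
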